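/- Let t ≥ 4 with t divisible by 4, and let T be the tree obtained by identifying the center of a star on t/2 vertices with an endvertex of a path on t/2 + 2 vertices. Let z be any vertex of T such that every component of T − z has at most ⌈t/2⌉ vertices. Then z is the unique such vertex, T − z has exactly two components (a path on t/2 vertices and a star on t/2 vertices), and every proper 2-colouring of T − z has a colour class with at least 3t/4 − 1 vertices. -/

import Mathlib

/-- The tree on `t+1` vertices obtained by identifying the center of a star on `t/2`
vertices with an endvertex of a path on `t/2 + 2` vertices: the path vertices are
`Fin (t/2 + 2)` (consecutive vertices adjacent), and the star leaves `Fin (t/2 - 1)`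
are all adjacent to path vertex `0`. -/
def starPathTree (t : ℕ) : SimpleGraph (Fin (t / 2 + 2) ⊕ Fin (t / 2 - 1)) :=
  SimpleGraph.fromRel (fun u v =>
    match u, v with
    | Sum.inl i, Sum.inl j => (i : ℕ) + 1 = (j : ℕ)
    | Sum.inl i, Sum.inr _ => (i : ℕ) = 0
    | _, _ => False)

namespace SPT

abbrev V (m : ℕ) := Fin (m + 2) ⊕ Fin (m - 1)

def spt (m : ℕ) : SimpleGraph (V m) :=
  SimpleGraph.fromRel (fun u v =>
    match u, v with
    | Sum.inl i, Sum.inl j => (i : ℕ) + 1 = (j : ℕ)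
    | Sum.inl i, Sum.inr _ => (i : ℕ) = 0
    | _, _ => False)

lemma spt_eq (t : ℕ) : starPathTree t = spt (t / 2) := by
  ext u v; cases u <;> cases v <;> rfl

lemma adj_ll {m : ℕ} (i j : Fin (m+2)) :
    (spt m).Adj (Sum.inl i) (Sum.inl j) ↔ (i.val + 1 = j.val ∨ j.val + 1 = i.val) := by
  simp only [spt, SimpleGraph.fromRel_adj]
  constructor
  · rintro ⟨-, h⟩; exact h
  · intro h
    refine ⟨?_, h⟩
    intro he
    injection he with he
    omega

lemma adj_lr {m : ℕ} (i : Fin (m+2)) (j : Fin (m-1)) :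
    (spt m).Adj (Sum.inl i) (Sum.inr j) ↔ i.val = 0 := by
  simp only [spt, SimpleGraph.fromRel_adj]
  constructor
  · rintro ⟨-, h | h⟩
    · exact h
    · exact h.elim
  · intro h
    exact ⟨by simp, Or.inl h⟩

lemma adj_rl {m : ℕ} (i : Fin (m+2)) (j : Fin (m-1)) :
    (spt m).Adj (Sum.inr j) (Sum.inl i) ↔ i.val = 0 := by
  rw [SimpleGraph.adj_comm, adj_lr]

lemma adj_rr {m : ℕ} (j j' : Fin (m-1)) :
    ¬ (spt m).Adj (Sum.inr j) (Sum.inr j') := by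
  simp [spt, SimpleGraph.fromRel_adj]

lemma chain {m : ℕ} (S : Set (V m)) (a b : Fin (m+2)) (hab : a.val ≤ b.val)
    (hS : ∀ i : Fin (m+2), a.val ≤ i.val → i.val ≤ b.val → Sum.inl i ∈ S) :
    ((spt m).induce S).Reachable ⟨Sum.inl a, hS a le_rfl hab⟩ ⟨Sum.inl b, hS b hab le_rfl⟩ := by
  obtain ⟨d, hd⟩ : ∃ d, b.val - a.val = d := ⟨_, rfl⟩
  induction d generalizing b with
  | zero =>
    have : a = b := Fin.ext (by omega)
    subst this
    exact SimpleGraph.Reachable.refl _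
  | succ n ih =>
    have hb1 : 1 ≤ b.val := by omega
    have hab' : a.val ≤ b.val - 1 := by omega
    have h1 : ((spt m).induce S).Reachable ⟨Sum.inl a, hS a le_rfl hab⟩
        ⟨Sum.inl ⟨b.val - 1, by omega⟩, hS _ hab' (Nat.sub_le b.val 1)⟩ :=
      ih ⟨b.val - 1, by omega⟩ hab' (fun i h1 h2 => hS i h1 (Nat.le_trans h2 (Nat.sub_le b.val 1)))
        (by show b.val - 1 - a.val = n; omega)
    refine h1.trans (SimpleGraph.Adj.reachable ?_)
    show (spt m).Adj (Sum.inl ⟨b.val - 1, by omega⟩) (Sum.inl b)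
    rw [adj_ll]
    left; show b.val - 1 + 1 = b.val; omega

lemma comp_lb {W : Type*} [Finite W] (G : SimpleGraph W) {D : Type*} [Finite D]
    (g : D → W) (hinj : Function.Injective g) (v : W)
    (hreach : ∀ j, G.Reachable (g j) v) :
    Nat.card D ≤ (G.connectedComponentMk v).supp.ncard := by
  have hsub : Set.range g ⊆ (G.connectedComponentMk v).supp := by
    rintro x ⟨j, rfl⟩
    rw [SimpleGraph.ConnectedComponent.mem_supp_iff]
    exact SimpleGraph.ConnectedComponent.sound (hreach j)
  calc Nat.card D = Nat.card (Set.range g) := (Nat.card_range_of_injective hinj).symm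
    _ = (Set.range g).ncard := Nat.card_coe_set_eq _
    _ ≤ _ := Set.ncard_le_ncard hsub (Set.toFinite _)

lemma ncard_range {W : Type*} {D : Type*} [Finite D] (g : D → W)
    (hinj : Function.Injective g) : (Set.range g).ncard = Nat.card D := by
  rw [← Nat.card_coe_set_eq, Nat.card_range_of_injective hinj]

lemma inl_ne_inl {m : ℕ} {x y : Fin (m+2)} (h : x.val ≠ y.val) :
    (Sum.inl x : V m) ≠ Sum.inl y := fun he => h (congrArg Fin.val (Sum.inl.inj he))

lemma inl_inj_val {m : ℕ} {x y : Fin (m+2)} (he : (Sum.inl x : V m) = Sum.inl y) :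
    x.val = y.val := congrArg Fin.val (Sum.inl.inj he)

lemma inr_inj_val {m : ℕ} {x y : Fin (m-1)} (he : (Sum.inr x : V m) = Sum.inr y) :
    x.val = y.val := congrArg Fin.val (Sum.inr.inj he)

lemma lemA {m : ℕ} (hm2 : 2 ≤ m) (w : V m)
    (hw : ∀ c : ((spt m).induce {v | v ≠ w}).ConnectedComponent, c.supp.ncard ≤ m) :
    w = Sum.inl ⟨1, by omega⟩ := by
  by_contra hne
  have key : ∀ (D : Type) (_ : Finite D) (g : D → ({v | v ≠ w} : Set (V m)))
      (_ : Function.Injective g) (v : ({v | v ≠ w} : Set (V m)))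
      (_ : ∀ j, ((spt m).induce {v | v ≠ w}).Reachable (g j) v), Nat.card D ≤ m := by
    intro D _ g hinj v hreach
    exact le_trans (comp_lb _ g hinj v hreach) (hw _)
  rcases w with a | b
  · by_cases ha0 : a.val = 0
    · -- removing the center: path 1..m+1 has m+1 vertices
      have hmem : ∀ j : ℕ, 1 ≤ j → (hj : j < m + 2) →
          (Sum.inl ⟨j, hj⟩ : V m) ∈ {v | v ≠ Sum.inl a} :=
        fun j h1 hj => inl_ne_inl (by show j ≠ a.val; omega)
      set g : Fin (m+1) → ({v | v ≠ Sum.inl a} : Set (V m)) :=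
        fun j => ⟨Sum.inl ⟨j.val + 1, by omega⟩, hmem _ (by omega) _⟩ with hg
      have hinj : Function.Injective g := by
        intro j j' h
        have := inl_inj_val (congrArg Subtype.val h)
        exact Fin.ext (by simpa using this)
      have := key _ inferInstance g hinj (g ⟨0, by omega⟩) ?_
      · rw [Nat.card_eq_fintype_card, Fintype.card_fin] at this; omega
      · intro j
        exact (chain {v | v ≠ Sum.inl a} ⟨1, by omega⟩ ⟨j.val + 1, by omega⟩
          (Nat.le_add_left 1 j.val)
          (fun i h1 h2 => hmem i.val h1 i.isLt)).symm
    · have ha1 : a.val ≠ 1 := fun h => hne (congrArg Sum.inl (Fin.ext h))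
      have ha2 : 2 ≤ a.val := by omega
      have hmem0 : (Sum.inl ⟨0, by omega⟩ : V m) ∈ {v | v ≠ Sum.inl a} :=
        inl_ne_inl (by show (0:ℕ) ≠ a.val; omega)
      have hmem1 : (Sum.inl ⟨1, by omega⟩ : V m) ∈ {v | v ≠ Sum.inl a} :=
        inl_ne_inl (by show (1:ℕ) ≠ a.val; omega)
      have hmemr : ∀ j : Fin (m-1), (Sum.inr j : V m) ∈ {v | v ≠ Sum.inl a} :=
        fun j h => Sum.inr_ne_inl h
      set g : Fin 2 ⊕ Fin (m-1) → ({v | v ≠ Sum.inl a} : Set (V m)) := fun x =>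
        match x with
        | Sum.inl i => if i.val = 0 then ⟨Sum.inl ⟨0, by omega⟩, hmem0⟩
            else ⟨Sum.inl ⟨1, by omega⟩, hmem1⟩
        | Sum.inr j => ⟨Sum.inr j, hmemr j⟩ with hg
      have hgl : ∀ i : Fin 2, (g (Sum.inl i)).val = Sum.inl ⟨i.val, by omega⟩ := by
        intro i
        rcases (by omega : i.val = 0 ∨ i.val = 1) with h | h <;>
          simp only [hg, h, ↓reduceIte, one_ne_zero, if_false]
      have hinj : Function.Injective g := by
        intro x y h
        have h' := congrArg Subtype.val h
        rcases x with i | j <;> rcases y with i' | j'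
        · rw [hgl i, hgl i'] at h'
          have := inl_inj_val h'
          exact congrArg Sum.inl (Fin.ext (by simpa using this))
        · rw [hgl i] at h'; exact absurd h' (by simp [hg])
        · rw [hgl i'] at h'; exact absurd h' (by simp [hg])
        · simp only [hg] at h'
          exact congrArg Sum.inr (Sum.inr.inj h')
      have := key _ inferInstance g hinj ⟨Sum.inl ⟨0, by omega⟩, hmem0⟩ ?_
      · rw [Nat.card_eq_fintype_card] at this
        simp only [Fintype.card_sum, Fintype.card_fin] at this
        omega
      · rintro (i | j)
        · rcases (by omega : i.val = 0 ∨ i.val = 1) with h | h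
          · have : g (Sum.inl i) = ⟨Sum.inl ⟨0, by omega⟩, hmem0⟩ := by simp [hg, h]; exact Fin.ext (by simp [h])
            rw [this]
          · have : g (Sum.inl i) = ⟨Sum.inl ⟨1, by omega⟩, hmem1⟩ := by simp [hg, h]; exact fun h' => by simp [h'] at h
            rw [this]
            refine SimpleGraph.Adj.reachable ?_
            show (spt m).Adj (Sum.inl ⟨1, by omega⟩) (Sum.inl ⟨0, by omega⟩)
            rw [adj_ll]; right; rfl
        · refine SimpleGraph.Adj.reachable ?_
          show (spt m).Adj (Sum.inr j) (Sum.inl ⟨0, by omega⟩)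
          rw [adj_rl]
  · -- removing a leaf: the path 0..m+1 has m+2 vertices
    have hmem : ∀ i : Fin (m+2), (Sum.inl i : V m) ∈ {v | v ≠ Sum.inr b} :=
      fun i h => Sum.inl_ne_inr h
    set g : Fin (m+1) → ({v | v ≠ Sum.inr b} : Set (V m)) :=
      fun j => ⟨Sum.inl ⟨j.val, by omega⟩, hmem _⟩ with hg
    have hinj : Function.Injective g := by
      intro j j' h
      have := inl_inj_val (congrArg Subtype.val h)
      exact Fin.ext (by simpa using this)
    have := key _ inferInstance g hinj (g ⟨0, by omega⟩) ?_
    · rw [Nat.card_eq_fintype_card, Fintype.card_fin] at this; omega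
    · intro j
      exact (chain {v | v ≠ Sum.inr b} ⟨0, by omega⟩ ⟨j.val, by omega⟩ (Nat.zero_le _)
        (fun i _ _ => hmem i)).symm

def zv (m : ℕ) : V m := Sum.inl ⟨1, by omega⟩

def Sv (m : ℕ) : Set (V m) := {v | v ≠ zv m}

def isP {m : ℕ} : V m → Prop := fun v =>
  match v with
  | Sum.inl i => 2 ≤ i.val
  | Sum.inr _ => False

lemma adj_pres {m : ℕ} {x y : V m} (hx : x ≠ zv m) (hy : y ≠ zv m)
    (h : (spt m).Adj x y) : isP x ↔ isP y := by
  rcases x with i | j <;> rcases y with i' | j'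
  · rw [adj_ll] at h
    have hi : i.val ≠ 1 := fun hh => hx (congrArg Sum.inl (Fin.ext hh))
    have hi' : i'.val ≠ 1 := fun hh => hy (congrArg Sum.inl (Fin.ext hh))
    show 2 ≤ i.val ↔ 2 ≤ i'.val
    omega
  · rw [adj_lr] at h
    show 2 ≤ i.val ↔ False
    simp; omega
  · rw [adj_rl] at h
    show False ↔ 2 ≤ i'.val
    simp; omega
  · exact absurd h (adj_rr _ _)

lemma walk_pres {m : ℕ} : ∀ {x y : ↥(Sv m)}, ((spt m).induce (Sv m)).Walk x y →
    (isP x.1 ↔ isP y.1)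
  | _, _, SimpleGraph.Walk.nil => Iff.rfl
  | x, y, @SimpleGraph.Walk.cons _ _ _ b _ h p => (adj_pres x.2 b.2 h).trans (walk_pres p)

lemma reach_pres {m : ℕ} {x y : ↥(Sv m)} (h : ((spt m).induce (Sv m)).Reachable x y) :
    isP x.1 ↔ isP y.1 := by
  obtain ⟨w⟩ := h
  exact walk_pres w

def p2 (m : ℕ) (hm : 2 ≤ m) : ↥(Sv m) := ⟨Sum.inl ⟨2, by omega⟩, inl_ne_inl (show (2:ℕ) ≠ 1 by omega)⟩

def v0 (m : ℕ) : ↥(Sv m) := ⟨Sum.inl ⟨0, by omega⟩, inl_ne_inl (show (0:ℕ) ≠ 1 by omega)⟩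

lemma mem_c1 {m : ℕ} (hm : 2 ≤ m) (x : ↥(Sv m)) :
    x ∈ (((spt m).induce (Sv m)).connectedComponentMk (p2 m hm)).supp ↔ isP x.1 := by
  rw [SimpleGraph.ConnectedComponent.mem_supp_iff]
  constructor
  · intro h
    have := reach_pres (SimpleGraph.ConnectedComponent.exact h)
    rw [this]
    exact le_refl 2
  · intro hP
    apply SimpleGraph.ConnectedComponent.sound
    obtain ⟨xv, hx⟩ := x
    rcases xv with i | j
    · have h2 : 2 ≤ i.val := hP
      exact (chain (Sv m) ⟨2, by omega⟩ i h2
        (fun i' h1 _ => inl_ne_inl (show i'.val ≠ 1 by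
          have : 2 ≤ i'.val := h1
          omega))).symm
    · exact absurd hP (by exact id)

lemma mem_c2 {m : ℕ} (x : ↥(Sv m)) :
    x ∈ (((spt m).induce (Sv m)).connectedComponentMk (v0 m)).supp ↔ ¬ isP x.1 := by
  rw [SimpleGraph.ConnectedComponent.mem_supp_iff]
  constructor
  · intro h hP
    have := reach_pres (SimpleGraph.ConnectedComponent.exact h)
    have h20 : ¬ isP ((v0 m).1) := by show ¬ (2 ≤ 0); omega
    exact h20 (this.mp hP)
  · intro hP
    apply SimpleGraph.ConnectedComponent.sound
    obtain ⟨xv, hx⟩ := x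
    rcases xv with i | j
    · have h2 : ¬ 2 ≤ i.val := hP
      have h1 : i.val ≠ 1 := fun hh => hx (congrArg Sum.inl (Fin.ext hh))
      have h0 : i = ⟨0, by omega⟩ := Fin.ext (show i.val = 0 by omega)
      have he : (⟨Sum.inl i, hx⟩ : ↥(Sv m)) = v0 m := Subtype.ext (congrArg Sum.inl h0)
      rw [he]
    · refine SimpleGraph.Adj.reachable ?_
      show (spt m).Adj (Sum.inr j) (Sum.inl ⟨0, by omega⟩)
      rw [adj_rl]

lemma adj_ll' {m : ℕ} {x y : ℕ} (hx : x < m+2) (hy : y < m+2) :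
    (spt m).Adj (Sum.inl ⟨x, hx⟩) (Sum.inl ⟨y, hy⟩) ↔ (x + 1 = y ∨ y + 1 = x) :=
  adj_ll _ _

lemma adj_lr' {m : ℕ} {x : ℕ} (hx : x < m+2) (j : Fin (m-1)) :
    (spt m).Adj (Sum.inl ⟨x, hx⟩) (Sum.inr j) ↔ x = 0 :=
  adj_lr _ _

def f1 {m : ℕ} (j : Fin m) : ↥(Sv m) :=
  ⟨Sum.inl ⟨j.val + 2, by omega⟩, inl_ne_inl (show j.val + 2 ≠ 1 by omega)⟩

lemma f1_inj {m : ℕ} : Function.Injective (f1 (m := m)) := by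
  intro j j' h
  have := inl_inj_val (congrArg Subtype.val h)
  exact Fin.ext (by simpa using this)

lemma range_f1 {m : ℕ} (hm : 2 ≤ m) :
    Set.range (f1 (m := m)) = (((spt m).induce (Sv m)).connectedComponentMk (p2 m hm)).supp := by
  ext x
  constructor
  · rintro ⟨j, rfl⟩
    exact (mem_c1 hm _).mpr (Nat.le_add_left 2 j.val)
  · intro hx
    have hP := (mem_c1 hm x).mp hx
    obtain ⟨xv, hvx⟩ := x
    rcases xv with i | j
    · have h2 : 2 ≤ i.val := hP
      have h3 : i.val < m + 2 := i.isLt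
      exact ⟨⟨i.val - 2, by omega⟩,
        Subtype.ext (congrArg Sum.inl (Fin.ext (show i.val - 2 + 2 = i.val by omega)))⟩
    · exact absurd hP id

lemma c1_card {m : ℕ} (hm : 2 ≤ m) :
    (((spt m).induce (Sv m)).connectedComponentMk (p2 m hm)).supp.ncard = m := by
  rw [← range_f1 hm, ncard_range _ f1_inj, Nat.card_eq_fintype_card, Fintype.card_fin]

def f2 {m : ℕ} (j : Fin m) : ↥(Sv m) :=
  if h : j.val = 0 then v0 m
  else ⟨Sum.inr ⟨j.val - 1, by omega⟩, fun hh => Sum.inr_ne_inl hh⟩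

lemma f2_inj {m : ℕ} : Function.Injective (f2 (m := m)) := by
  intro j j' h
  by_cases h0 : j.val = 0 <;> by_cases h0' : j'.val = 0
  · exact Fin.ext (by omega)
  · rw [f2, f2, dif_pos h0, dif_neg h0'] at h
    exact absurd (congrArg Subtype.val h) (fun hh => Sum.inl_ne_inr hh)
  · rw [f2, f2, dif_neg h0, dif_pos h0'] at h
    exact absurd (congrArg Subtype.val h) (fun hh => Sum.inr_ne_inl hh)
  · rw [f2, f2, dif_neg h0, dif_neg h0'] at h
    have := inr_inj_val (congrArg Subtype.val h)
    simp only [] at this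
    exact Fin.ext (by omega)

lemma range_f2 {m : ℕ} (hm : 2 ≤ m) :
    Set.range (f2 (m := m)) = (((spt m).induce (Sv m)).connectedComponentMk (v0 m)).supp := by
  ext x
  constructor
  · rintro ⟨j, rfl⟩
    refine (mem_c2 _).mpr ?_
    by_cases h0 : j.val = 0
    · rw [f2, dif_pos h0]
      show ¬ (2 ≤ 0); omega
    · rw [f2, dif_neg h0]
      exact id
  · intro hx
    have hP := (mem_c2 x).mp hx
    obtain ⟨xv, hvx⟩ := x
    rcases xv with i | j
    · have h2 : ¬ 2 ≤ i.val := hP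
      have h1 : i.val ≠ 1 := fun hh => hvx (congrArg Sum.inl (Fin.ext hh))
      refine ⟨⟨0, by omega⟩, ?_⟩
      rw [f2, dif_pos rfl]
      exact Subtype.ext (congrArg Sum.inl (Fin.ext (show (0:ℕ) = i.val by omega)))
    · have hj : j.val < m - 1 := j.isLt
      refine ⟨⟨j.val + 1, by omega⟩, ?_⟩
      rw [f2, dif_neg (show j.val + 1 ≠ 0 by omega)]
      exact Subtype.ext (congrArg Sum.inr (Fin.ext (show j.val + 1 - 1 = j.val by omega)))

lemma c2_card {m : ℕ} (hm : 2 ≤ m) :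
    (((spt m).induce (Sv m)).connectedComponentMk (v0 m)).supp.ncard = m := by
  rw [← range_f2 hm, ncard_range _ f2_inj, Nat.card_eq_fintype_card, Fintype.card_fin]

lemma c1_ne_c2 {m : ℕ} (hm : 2 ≤ m) :
    ((spt m).induce (Sv m)).connectedComponentMk (p2 m hm) ≠
      ((spt m).induce (Sv m)).connectedComponentMk (v0 m) := by
  intro h
  have h1 : (p2 m hm) ∈ (((spt m).induce (Sv m)).connectedComponentMk (v0 m)).supp := by
    rw [← h, SimpleGraph.ConnectedComponent.mem_supp_iff]
  exact (mem_c2 _).mp h1 (le_refl 2)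

lemma cover {m : ℕ} (hm : 2 ≤ m) (c : ((spt m).induce (Sv m)).ConnectedComponent) :
    c = ((spt m).induce (Sv m)).connectedComponentMk (p2 m hm) ∨
    c = ((spt m).induce (Sv m)).connectedComponentMk (v0 m) := by
  obtain ⟨x⟩ := c
  by_cases hx : isP x.1
  · left
    show ((spt m).induce (Sv m)).connectedComponentMk x = _
    rw [← SimpleGraph.ConnectedComponent.mem_supp_iff]
    exact (mem_c1 hm x).mpr hx
  · right
    show ((spt m).induce (Sv m)).connectedComponentMk x = _
    rw [← SimpleGraph.ConnectedComponent.mem_supp_iff]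
    exact (mem_c2 x).mpr hx

noncomputable def e1 {m : ℕ} (hm : 2 ≤ m) :
    Fin m ≃ ↥(((spt m).induce (Sv m)).connectedComponentMk (p2 m hm)).supp :=
  Equiv.ofBijective (fun j => ⟨f1 j, by rw [← range_f1 hm]; exact ⟨j, rfl⟩⟩)
    ⟨fun j j' h => f1_inj (congrArg Subtype.val h),
     by
      rintro ⟨x, hx⟩
      rw [← range_f1 hm] at hx
      obtain ⟨j, hj⟩ := hx
      exact ⟨j, Subtype.ext hj⟩⟩

lemma iso1 {m : ℕ} (hm : 2 ≤ m) :
    Nonempty ((((spt m).induce (Sv m)).induce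
      (((spt m).induce (Sv m)).connectedComponentMk (p2 m hm)).supp) ≃g
        SimpleGraph.pathGraph m) := by
  refine ⟨(SimpleGraph.Iso.symm ⟨e1 hm, ?_⟩ : _ ≃g _)⟩
  intro a b
  show (spt m).Adj (Sum.inl ⟨a.val + 2, by omega⟩) (Sum.inl ⟨b.val + 2, by omega⟩) ↔ _
  rw [adj_ll', SimpleGraph.pathGraph_adj]
  omega

noncomputable def e2 {m : ℕ} :
    PUnit ⊕ Fin (m-1) ≃ ↥(((spt m).induce (Sv m)).connectedComponentMk (v0 m)).supp :=
  Equiv.ofBijective (fun x =>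
    match x with
    | Sum.inl _ => ⟨v0 m, (mem_c2 _).mpr (by show ¬ (2 ≤ 0); omega)⟩
    | Sum.inr j => ⟨⟨Sum.inr j, fun hh => Sum.inr_ne_inl hh⟩, (mem_c2 _).mpr id⟩)
    ⟨by
      rintro (⟨⟩ | j) (⟨⟩ | j') h
      · rfl
      · exact absurd (congrArg (fun w => w.val.val) h) (fun hh => Sum.inl_ne_inr hh)
      · exact absurd (congrArg (fun w => w.val.val) h) (fun hh => Sum.inr_ne_inl hh)
      · have := inr_inj_val (congrArg (fun w => w.val.val) h)
        exact congrArg Sum.inr (Fin.ext this),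
     by
      rintro ⟨⟨xv, hvx⟩, hx⟩
      have hP := (mem_c2 _).mp hx
      rcases xv with i | j
      · have h2 : ¬ 2 ≤ i.val := hP
        have h1 : i.val ≠ 1 := fun hh => hvx (congrArg Sum.inl (Fin.ext hh))
        refine ⟨Sum.inl PUnit.unit, ?_⟩
        exact Subtype.ext (Subtype.ext (congrArg Sum.inl (Fin.ext (show (0:ℕ) = i.val by omega))))
      · exact ⟨Sum.inr j, rfl⟩⟩

lemma iso2 {m : ℕ} :
    Nonempty ((((spt m).induce (Sv m)).induce
      (((spt m).induce (Sv m)).connectedComponentMk (v0 m)).supp) ≃g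
        completeBipartiteGraph PUnit (Fin (m-1))) := by
  refine ⟨(SimpleGraph.Iso.symm ⟨e2, ?_⟩ : _ ≃g _)⟩
  rintro (⟨⟩ | j) (⟨⟩ | j')
  · show (spt m).Adj (Sum.inl ⟨0, by omega⟩) (Sum.inl ⟨0, by omega⟩) ↔ _
    rw [adj_ll']
    simp
  · show (spt m).Adj (Sum.inl ⟨0, by omega⟩) (Sum.inr j') ↔ _
    rw [adj_lr']
    simp
  · show (spt m).Adj (Sum.inr j) (Sum.inl ⟨0, by omega⟩) ↔ _
    rw [SimpleGraph.adj_comm, adj_lr']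
    simp
  · show (spt m).Adj (Sum.inr j) (Sum.inr j') ↔ _
    simp [adj_rr j j']

lemma colouring {m k : ℕ} (hm : m = 2*k) (hk : 1 ≤ k)
    (col : ↥(Sv m) → Bool)
    (hcol : ∀ u v, ((spt m).induce (Sv m)).Adj u v → col u ≠ col v) :
    3 * k - 1 ≤ max {u | col u = false}.ncard {u | col u = true}.ncard := by
  have hm2 : 2 ≤ m := by omega
  set b : Bool := !(col (v0 m)) with hbdef
  have bool2 : ∀ x y : Bool, x ≠ y → x = !y := by decide
  have bool3 : ∀ x y bb : Bool, x ≠ y → ¬(x = bb) → y = bb := by decide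
  have hleafmem : ∀ j : Fin (m-1), (Sum.inr j : V m) ∈ Sv m := fun j hh => Sum.inr_ne_inl hh
  have hleaf : ∀ j : Fin (m-1), col ⟨Sum.inr j, hleafmem j⟩ = b := by
    intro j
    have hadj : ((spt m).induce (Sv m)).Adj ⟨Sum.inr j, hleafmem j⟩ (v0 m) := by
      show (spt m).Adj (Sum.inr j) (Sum.inl ⟨0, by omega⟩)
      rw [adj_rl]
    have hne := hcol _ _ hadj
    rw [hbdef]
    exact bool2 _ _ hne
  have hXlt : ∀ j : Fin k, 2*j.val + 2 < m + 2 := fun j => by have := j.isLt; omega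
  have hYlt : ∀ j : Fin k, 2*j.val + 3 < m + 2 := fun j => by have := j.isLt; omega
  set X : Fin k → ↥(Sv m) := fun j =>
    ⟨Sum.inl ⟨2*j.val+2, hXlt j⟩, inl_ne_inl (show 2*j.val+2 ≠ 1 by omega)⟩ with hXdef
  set Y : Fin k → ↥(Sv m) := fun j =>
    ⟨Sum.inl ⟨2*j.val+3, hYlt j⟩, inl_ne_inl (show 2*j.val+3 ≠ 1 by omega)⟩ with hYdef
  have hXY : ∀ j, col (X j) ≠ col (Y j) := fun j => hcol _ _ (by
    show (spt m).Adj (Sum.inl ⟨2*j.val+2, hXlt j⟩) (Sum.inl ⟨2*j.val+3, hYlt j⟩)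
    rw [adj_ll']
    omega)
  set F : Fin (m-1) ⊕ Fin k → ↥(Sv m) := fun p =>
    match p with
    | Sum.inl j => ⟨Sum.inr j, hleafmem j⟩
    | Sum.inr j => if col (X j) = b then X j else Y j with hFdef
  have hFcol : ∀ p, col (F p) = b := by
    rintro (j | j)
    · exact hleaf j
    · show col (if col (X j) = b then X j else Y j) = b
      by_cases hc : col (X j) = b
      · rw [if_pos hc]; exact hc
      · rw [if_neg hc]
        exact bool3 _ _ _ (hXY j) hc
  have hFinj : Function.Injective F := by
    have hFr : ∀ j : Fin k, F (Sum.inr j) = X j ∨ F (Sum.inr j) = Y j := by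
      intro j
      show (if col (X j) = b then X j else Y j) = X j ∨ (if col (X j) = b then X j else Y j) = Y j
      by_cases hc : col (X j) = b
      · left; rw [if_pos hc]
      · right; rw [if_neg hc]
    have hFrval : ∀ j : Fin k, ∃ w, ((F (Sum.inr j)).1 = Sum.inl w ∧
        (w.val = 2*j.val+2 ∨ w.val = 2*j.val+3)) := by
      intro j
      rcases hFr j with h | h <;> rw [h]
      · exact ⟨⟨2*j.val+2, hXlt j⟩, rfl, Or.inl rfl⟩
      · exact ⟨⟨2*j.val+3, hYlt j⟩, rfl, Or.inr rfl⟩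
    rintro (j | j) (j' | j') h
    · have := inr_inj_val (congrArg Subtype.val h)
      exact congrArg Sum.inl (Fin.ext this)
    · obtain ⟨w, hw, -⟩ := hFrval j'
      have h' := congrArg Subtype.val h
      rw [hw] at h'
      exact absurd h' (fun hh => Sum.inr_ne_inl hh)
    · obtain ⟨w, hw, -⟩ := hFrval j
      have h' := congrArg Subtype.val h
      rw [hw] at h'
      exact absurd h' (fun hh => Sum.inl_ne_inr hh)
    · obtain ⟨w, hw, hwv⟩ := hFrval j
      obtain ⟨w', hw', hwv'⟩ := hFrval j'
      have h' := congrArg Subtype.val h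
      rw [hw, hw'] at h'
      have := inl_inj_val h'
      exact congrArg Sum.inr (Fin.ext (by omega))
  have hsub : Set.range F ⊆ {u | col u = b} := by
    rintro x ⟨p, rfl⟩
    exact hFcol p
  have hcard : 3*k - 1 ≤ {u | col u = b}.ncard := by
    have h1 := Set.ncard_le_ncard hsub (Set.toFinite _)
    rw [ncard_range _ hFinj, Nat.card_eq_fintype_card] at h1
    simp only [Fintype.card_sum, Fintype.card_fin] at h1
    omega
  rcases Bool.eq_false_or_eq_true b with hbv | hbv
  · rw [hbv] at hcard
    exact le_trans hcard (le_max_right _ _)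
  · rw [hbv] at hcard
    exact le_trans hcard (le_max_left _ _)

theorem main (m k : ℕ) (hm : m = 2*k) (hk : 1 ≤ k) (z : V m)
    (hz : ∀ c : ((spt m).induce {v | v ≠ z}).ConnectedComponent, c.supp.ncard ≤ m) :
    (∀ z', (∀ c : ((spt m).induce {v | v ≠ z'}).ConnectedComponent,
        c.supp.ncard ≤ m) → z' = z) ∧
    (∃ c₁ c₂ : ((spt m).induce {v | v ≠ z}).ConnectedComponent,
        c₁ ≠ c₂ ∧ (∀ c, c = c₁ ∨ c = c₂) ∧
        c₁.supp.ncard = m ∧ c₂.supp.ncard = m ∧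
        Nonempty ((((spt m).induce {v | v ≠ z}).induce c₁.supp) ≃g
          SimpleGraph.pathGraph m) ∧
        Nonempty ((((spt m).induce {v | v ≠ z}).induce c₂.supp) ≃g
          completeBipartiteGraph PUnit (Fin (m - 1)))) ∧
    (∀ col : ({v | v ≠ z} : Set (V m)) → Bool,
        (∀ u v, ((spt m).induce {v | v ≠ z}).Adj u v → col u ≠ col v) →
        3 * k - 1 ≤ max {u | col u = false}.ncard {u | col u = true}.ncard) := by
  have hm2 : 2 ≤ m := by omega
  have hzz : z = zv m := lemA hm2 z hz
  subst hzz
  refine ⟨fun z' hz' => lemA hm2 z' hz', ?_, ?_⟩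
  · exact ⟨_, _, c1_ne_c2 hm2, cover hm2, c1_card hm2, c2_card hm2, iso1 hm2, iso2⟩
  · intro col hcol
    exact colouring hm hk col hcol

end SPT

/-- For `t ≥ 4` divisible by `4`, let `T` be the star-path tree and let `z` be any
vertex such that every component of `T − z` has at most `⌈t/2⌉ = t/2` vertices. Then
`z` is unique, `T − z` has exactly two components — a path on `t/2` vertices and a star
on `t/2` vertices — and every proper 2-colouring of `T − z` has a colour class with at
least `3t/4 − 1` vertices. -/
theorem starPathTree_unbalanced (t : ℕ) (ht4 : 4 ∣ t) (ht : 4 ≤ t) :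
    ∀ z : Fin (t / 2 + 2) ⊕ Fin (t / 2 - 1),
      (∀ c : ((starPathTree t).induce {v | v ≠ z}).ConnectedComponent,
        c.supp.ncard ≤ t / 2) →
      ((∀ z', (∀ c : ((starPathTree t).induce {v | v ≠ z'}).ConnectedComponent,
          c.supp.ncard ≤ t / 2) → z' = z) ∧
       (∃ c₁ c₂ : ((starPathTree t).induce {v | v ≠ z}).ConnectedComponent,
          c₁ ≠ c₂ ∧ (∀ c, c = c₁ ∨ c = c₂) ∧
          c₁.supp.ncard = t / 2 ∧ c₂.supp.ncard = t / 2 ∧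
          Nonempty ((((starPathTree t).induce {v | v ≠ z}).induce c₁.supp) ≃g
            SimpleGraph.pathGraph (t / 2)) ∧
          Nonempty ((((starPathTree t).induce {v | v ≠ z}).induce c₂.supp) ≃g
            completeBipartiteGraph PUnit (Fin (t / 2 - 1)))) ∧
       (∀ col : ({v | v ≠ z} : Set (Fin (t / 2 + 2) ⊕ Fin (t / 2 - 1))) → Bool,
          (∀ u v, ((starPathTree t).induce {v | v ≠ z}).Adj u v → col u ≠ col v) →
          3 * t / 4 - 1 ≤ max {u | col u = false}.ncard {u | col u = true}.ncard)) := by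
  intro z hz
  obtain ⟨k, rfl⟩ := ht4
  rw [SPT.spt_eq] at hz ⊢
  obtain ⟨A, B, C⟩ := SPT.main (4*k/2) k (by omega) (by omega) z hz
  exact ⟨A, B, fun col hc => le_trans (le_of_eq (by omega)) (C col hc)⟩
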